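/- Let (M, d) be a compact metric space and P a probability measure with support M. Let δ > 0 and 0 < ρ < 1, and define w(δ/2) by 1/w(δ/2) = inf_{p∈M} P(B_{δ/2}(p)). If X_1,…,X_n are i.i.d. samples from P with n ≥ w(δ/2) · log( N(M, d, δ/2) / ρ ), then with probability at least 1 − ρ the points X_1,…,X_n form a δ-net of M, i.e., every point of M is within distance δ of some X_i. -/

import Mathlib

open MeasureTheory ProbabilityTheory ENNReal

noncomputable section

/-- The covering number of a set `S` at scale `ε`, with respect to an extended
distance function `d`: the minimal cardinality of a finite set of centers whose
`ε`-balls (for `d`) cover `S`. -/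
def coveringNumber {A : Type*} (d : A → A → ℝ≥0∞) (S : Set A) (ε : ℝ) : ℝ≥0∞ :=
  ⨅ (t : Finset A) (_ : ∀ a ∈ S, ∃ c ∈ t, d a c ≤ ENNReal.ofReal ε), (t.card : ℝ≥0∞)

/-- The packing number of a set `S` at scale `ε`, with respect to an extended
distance function `d`: the maximal cardinality of a finite subset of `S` whose
points have pairwise distances `> ε`. -/
def packingNumber {A : Type*} (d : A → A → ℝ≥0∞) (S : Set A) (ε : ℝ) : ℝ≥0∞ :=
  ⨆ (t : Finset A) (_ : ↑t ⊆ S ∧ (t : Set A).Pairwise fun x y => ENNReal.ofReal ε < d x y),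
    (t.card : ℝ≥0∞)

/-- The sup-distance over `S` between two functions (this is the sup norm of the
difference of the restrictions to `S`). -/
def supDist {A E' : Type*} [PseudoEMetricSpace E'] (S : Set A) (f g : A → E') : ℝ≥0∞ :=
  ⨆ x ∈ S, edist (f x) (g x)

/-- The Hölder ball `C_B^α(Ω)`: functions whose derivatives of order `≤ ⌊α⌋` are
bounded by `B` on `Ω` and whose `⌊α⌋`-th derivative is `(α - ⌊α⌋)`-Hölder with
constant `B` on `Ω`. -/
def holderBall {k : ℕ} (Ω : Set (EuclideanSpace ℝ (Fin k))) (α B : ℝ) :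
    Set (EuclideanSpace ℝ (Fin k) → ℝ) :=
  {f | ContDiffOn ℝ (⌊α⌋₊) f Ω ∧
    (∀ i ≤ ⌊α⌋₊, ∀ x ∈ Ω, ‖iteratedFDerivWithin ℝ i f Ω x‖ ≤ B) ∧
    ∀ x ∈ Ω, ∀ y ∈ Ω,
      ‖iteratedFDerivWithin ℝ (⌊α⌋₊) f Ω x - iteratedFDerivWithin ℝ (⌊α⌋₊) f Ω y‖ ≤
        B * ‖x - y‖ ^ (α - (⌊α⌋₊ : ℝ))}

/-- The Hölder integral probability metric `d_{α,B}(μ, ν)`. -/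
def holderIPM {k : ℕ} (Ω : Set (EuclideanSpace ℝ (Fin k))) (α B : ℝ)
    (μ ν : Measure (EuclideanSpace ℝ (Fin k))) : ℝ :=
  ⨆ f ∈ holderBall Ω α B, (∫ x, f x ∂μ - ∫ x, f x ∂ν)

/-- The empirical measure of the tuple `x = (x 0, …, x (n-1))`. -/
def empMeas {T : Type*} [MeasurableSpace T] {n : ℕ} (x : Fin n → T) : Measure T :=
  (n : ℝ≥0∞)⁻¹ • ∑ i, Measure.dirac (x i)

/-- Optimal transport cost between `μ` and `ν` for the (extended) cost `c`:
infimum over couplings of the expected cost. -/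
def transportCost {T : Type*} [MeasurableSpace T] (c : T → T → ℝ≥0∞) (μ ν : Measure T) : ℝ≥0∞ :=
  ⨅ γ : {γ : Measure (T × T) // γ.map Prod.fst = μ ∧ γ.map Prod.snd = ν},
    ∫⁻ p, c p.1 p.2 ∂(γ : Measure (T × T))

/-- The Wasserstein-1 distance (for the metric of the space). -/
def W1 {T : Type*} [MeasurableSpace T] [PseudoEMetricSpace T] (μ ν : Measure T) : ℝ :=
  (transportCost (fun x y => edist x y) μ ν).toReal

/-- The Wasserstein-2 distance (ℝ≥0∞-valued). -/
def W2e {T : Type*} [MeasurableSpace T] [PseudoEMetricSpace T] (μ ν : Measure T) : ℝ≥0∞ :=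
  (transportCost (fun x y => edist x y ^ 2) μ ν) ^ (1 / 2 : ℝ)

-- Kullback–Leibler divergence `KL(ν ‖ μ)` (`∞` if the log-likelihood ratio is not integrable).
open Classical in
def klDiv' {T : Type*} [MeasurableSpace T] (ν μ : Measure T) : ℝ≥0∞ :=
  if Integrable (fun x => Real.log ((ν.rnDeriv μ x).toReal)) ν then
    ENNReal.ofReal (∫ x, Real.log ((ν.rnDeriv μ x).toReal) ∂ν)
  else ⊤

/-- `μ` satisfies a T2 (transportation) inequality with constant `c₂`:
`W₂(μ, ν) ≤ √(2 c₂ KL(ν ‖ μ))` for all probability measures `ν ≪ μ`. -/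
def SatisfiesT2 {T : Type*} [MeasurableSpace T] [PseudoEMetricSpace T]
    (μ : Measure T) (c₂ : ℝ) : Prop :=
  ∀ ν : Measure T, IsProbabilityMeasure ν → ν ≪ μ →
    W2e μ ν ≤ (2 * ENNReal.ofReal c₂ * klDiv' ν μ) ^ (1 / 2 : ℝ)

/-- The medial axis of a set: the closure of the set of points having at least two
nearest points in `S`. -/
def medialAxis {E : Type*} [MetricSpace E] (S : Set E) : Set E :=
  closure {x | ∃ p ∈ S, ∃ q ∈ S,
    p ≠ q ∧ dist x p = Metric.infDist x S ∧ dist x q = Metric.infDist x S}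

/-- The reach of a set: the distance from `S` to its medial axis. -/
def reach {E : Type*} [MetricSpace E] (S : Set E) : ℝ≥0∞ :=
  ⨅ x ∈ medialAxis S, EMetric.infEdist x S

/-- A piecewise-smooth curve `γ : [0,1] → E`. -/
def PiecewiseSmooth {E : Type*} [NormedAddCommGroup E] [NormedSpace ℝ E] (γ : ℝ → E) : Prop :=
  ∃ (m : ℕ) (t : Fin (m + 1) → ℝ), Monotone t ∧ t 0 = 0 ∧ t (Fin.last m) = 1 ∧
    ∀ k : Fin m, ContDiffOn ℝ (⊤ : ℕ∞) γ (Set.Icc (t k.castSucc) (t k.succ))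

/-- The geodesic (intrinsic) distance in `M`: the infimum of lengths of piecewise
smooth curves joining `p` to `q` inside `M`. -/
def geodesicDist {E : Type*} [NormedAddCommGroup E] [NormedSpace ℝ E] (M : Set E)
    (p q : E) : ℝ≥0∞ :=
  ⨅ (γ : ℝ → E) (_ : γ 0 = p ∧ γ 1 = q ∧ (∀ t ∈ Set.Icc (0 : ℝ) 1, γ t ∈ M) ∧
    PiecewiseSmooth γ), eVariationOn γ (Set.Icc 0 1)

/-- `M` is geodesically convex: the infimum defining the geodesic distance is
attained for every pair of points. -/
def GeodesicallyConvex {E : Type*} [NormedAddCommGroup E] [NormedSpace ℝ E] (M : Set E) : Prop :=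
  ∀ p ∈ M, ∀ q ∈ M, ∃ γ : ℝ → E, γ 0 = p ∧ γ 1 = q ∧
    (∀ t ∈ Set.Icc (0 : ℝ) 1, γ t ∈ M) ∧ PiecewiseSmooth γ ∧
    eVariationOn γ (Set.Icc 0 1) = geodesicDist M p q

/-- The intrinsic diameter of `M`. -/
def intrinsicDiameter {E : Type*} [NormedAddCommGroup E] [NormedSpace ℝ E] (M : Set E) : ℝ≥0∞ :=
  ⨆ p ∈ M, ⨆ q ∈ M, geodesicDist M p q

/-- `M ⊆ ℝ^D` is a `d`-dimensional smooth submanifold: locally, `M` is the zero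
set of a smooth submersion into `ℝ^(D-d)`. -/
def IsSmoothSubmanifold {D : ℕ} (d : ℕ) (M : Set (EuclideanSpace ℝ (Fin D))) : Prop :=
  ∀ x ∈ M, ∃ (U : Set (EuclideanSpace ℝ (Fin D)))
    (f : EuclideanSpace ℝ (Fin D) → EuclideanSpace ℝ (Fin (D - d))),
    IsOpen U ∧ x ∈ U ∧ ContDiffOn ℝ (⊤ : ℕ∞) f U ∧
    (∀ y ∈ U, Function.Surjective (fderivWithin ℝ f U y)) ∧
    M ∩ U = U ∩ f ⁻¹' {0}

/-- `ω_d`: the volume of the Euclidean unit ball in `ℝ^d`. -/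
def unitBallVol (d : ℕ) : ℝ := (volume (Metric.ball (0 : EuclideanSpace ℝ (Fin d)) 1)).toReal

/-- `vol M`: the `d`-dimensional volume (Hausdorff measure) of `M`. -/
def mfldVol {D : ℕ} (d : ℕ) (M : Set (EuclideanSpace ℝ (Fin D))) : ℝ := (μH[(d : ℝ)] M).toReal

/-- `S` has doubling dimension `d`: every ball in `S` can be covered by `2^d`
balls of half the radius. -/
def HasDoublingDimension {E : Type*} [PseudoMetricSpace E] (S : Set E) (d : ℕ) : Prop :=
  ∀ x ∈ S, ∀ r : ℝ, 0 < r → ∃ t : Finset E, t.card ≤ 2 ^ d ∧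
    Metric.ball x r ∩ S ⊆ ⋃ c ∈ t, Metric.ball c (r / 2)

/-- Shortest-path distance between vertices `i` and `j` in the geometric graph on
`x 0, …, x (n-1)` with connectivity radius `ε` and Euclidean edge weights. -/
def graphDist {E : Type*} [PseudoMetricSpace E] {n : ℕ} (x : Fin n → E) (ε : ℝ)
    (i j : Fin n) : ℝ≥0∞ :=
  ⨅ (m : ℕ) (p : Fin (m + 1) → Fin n)
    (_ : p 0 = i ∧ p (Fin.last m) = j ∧
      ∀ k : Fin m, dist (x (p k.castSucc)) (x (p k.succ)) ≤ ε),
    ∑ k : Fin m, edist (x (p k.castSucc)) (x (p k.succ))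

/-- Graph distance extended to arbitrary points of the ambient space via projection
to a nearest vertex. -/
def graphDistExt {E : Type*} [PseudoMetricSpace E] {n : ℕ} (x : Fin n → E) (ε : ℝ)
    (p q : E) : ℝ≥0∞ :=
  ⨅ (i : Fin n) (_ : ∀ k, dist p (x i) ≤ dist p (x k))
    (j : Fin n) (_ : ∀ k, dist q (x j) ≤ dist q (x k)),
    edist p (x i) + graphDist x ε i j + edist q (x j)

end

/-- With probability at least `1 − ρ`, `n` i.i.d. samples from a
fully supported measure on a compact metric space form a `δ`-net, provided
`n ≥ w(δ/2) log(N(M, d, δ/2)/ρ)`. -/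
theorem samples_form_net
    {T : Type*} [MetricSpace T] [CompactSpace T] [MeasurableSpace T] [BorelSpace T]
    (P : Measure T) [IsProbabilityMeasure P]
    (hsupp : ∀ U : Set T, IsOpen U → U.Nonempty → 0 < P U)
    (δ ρ : ℝ) (hδ : 0 < δ) (hρ0 : 0 < ρ) (hρ1 : ρ < 1)
    {Ω' : Type*} [MeasurableSpace Ω'] (Pr : Measure Ω') [IsProbabilityMeasure Pr]
    (n : ℕ) (X : Fin n → Ω' → T)
    (hmeas : ∀ i, Measurable (X i))
    (hindep : iIndepFun X Pr)
    (hid : ∀ i, Measure.map (X i) Pr = P)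
    (hn : (⨅ p : T, P (Metric.ball p (δ / 2)))⁻¹ *
        ENNReal.ofReal (Real.log
          ((coveringNumber (fun x y => edist x y) (Set.univ : Set T) (δ / 2)).toReal / ρ)) ≤
        (n : ℝ≥0∞)) :
    ENNReal.ofReal (1 - ρ) ≤ Pr {ω | ∀ p : T, ∃ i, dist p (X i ω) ≤ δ} := by
  classical
  set r : ℝ := δ / 2 with hrdef
  have hr : 0 < r := half_pos hδ
  rcases isEmpty_or_nonempty T with hT | hT
  · have : {ω | ∀ p : T, ∃ i, dist p (X i ω) ≤ δ} = Set.univ :=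
      Set.eq_univ_of_forall fun ω p => (hT.false p).elim
    rw [this, measure_univ]
    exact ENNReal.ofReal_le_one.mpr (by linarith)
  -- the infimum of ball measures
  set α : ℝ≥0∞ := ⨅ p : T, P (Metric.ball p r) with hα
  have hballpos : ∀ (q : T) (s : ℝ), 0 < s → 0 < P (Metric.ball q s) := by
    intro q s hs
    exact hsupp _ Metric.isOpen_ball ⟨q, Metric.mem_ball_self hs⟩
  have hα0 : 0 < α := by
    obtain ⟨s, -, hsfin, hcov⟩ :=
      (isCompact_univ : IsCompact (Set.univ : Set T)).finite_cover_balls (half_pos hr)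
    have hle : ∀ p : T, hsfin.toFinset.inf (fun q => P (Metric.ball q (r / 2)))
        ≤ P (Metric.ball p r) := by
      intro p
      obtain ⟨q, hq, hpq⟩ := Set.mem_iUnion₂.mp (hcov (Set.mem_univ p))
      refine le_trans (Finset.inf_le (hsfin.mem_toFinset.mpr hq)) (measure_mono ?_)
      intro x hx
      have h1 : dist x q < r / 2 := hx
      have h2 : dist p q < r / 2 := hpq
      have : dist x p < r := by
        calc dist x p ≤ dist x q + dist q p := dist_triangle _ _ _
          _ < r / 2 + r / 2 := by rw [dist_comm q p]; linarith
          _ = r := by ring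
      exact this
    have hne : hsfin.toFinset.Nonempty := by
      obtain ⟨p⟩ := hT
      obtain ⟨q, hq, -⟩ := Set.mem_iUnion₂.mp (hcov (Set.mem_univ p))
      exact ⟨q, hsfin.mem_toFinset.mpr hq⟩
    have hinfpos : 0 < hsfin.toFinset.inf (fun q => P (Metric.ball q (r / 2))) := by
      rw [Finset.lt_inf_iff (by simpa using hne)]
      · intro q _; exact hballpos q _ (half_pos hr)
    exact lt_of_lt_of_le hinfpos (le_iInf hle)
  have hα1 : α ≤ 1 := by
    obtain ⟨p⟩ := hT
    exact le_trans (iInf_le _ p) prob_le_one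
  have hαtop : α ≠ ⊤ := (lt_of_le_of_lt hα1 one_lt_top).ne
  set a : ℝ := α.toReal with ha
  have ha0 : 0 < a := ENNReal.toReal_pos hα0.ne' hαtop
  have ha1 : a ≤ 1 := by
    have := ENNReal.toReal_mono one_ne_top hα1
    simpa using this
  have hαa : α = ENNReal.ofReal a := (ENNReal.ofReal_toReal hαtop).symm
  -- minimal covering finset
  set S : Set ℕ := {k : ℕ | ∃ t : Finset T, t.card = k ∧
      ∀ p ∈ (Set.univ : Set T), ∃ c ∈ t, edist p c ≤ ENNReal.ofReal r} with hS
  have hSne : S.Nonempty := by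
    obtain ⟨s, -, hsfin, hcov⟩ :=
      (isCompact_univ : IsCompact (Set.univ : Set T)).finite_cover_balls hr
    refine ⟨hsfin.toFinset.card, hsfin.toFinset, rfl, ?_⟩
    intro p _
    obtain ⟨q, hq, hpq⟩ := Set.mem_iUnion₂.mp (hcov (Set.mem_univ p))
    exact ⟨q, hsfin.mem_toFinset.mpr hq, by
      rw [edist_dist]; exact ENNReal.ofReal_le_ofReal (le_of_lt hpq)⟩
  obtain ⟨t, htcard, htcov⟩ : sInf S ∈ S := Nat.sInf_mem hSne
  set k₀ : ℕ := sInf S with hk₀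
  have hcovN : coveringNumber (fun x y => edist x y) (Set.univ : Set T) r = (k₀ : ℝ≥0∞) := by
    apply le_antisymm
    · exact le_trans (iInf₂_le t htcov) (by rw [htcard])
    · refine le_iInf₂ fun t' ht' => ?_
      have hmem : t'.card ∈ S := ⟨t', rfl, ht'⟩
      exact_mod_cast Nat.sInf_le hmem
  have htne : t.Nonempty := by
    obtain ⟨p⟩ := hT
    obtain ⟨c, hc, -⟩ := htcov p (Set.mem_univ p)
    exact ⟨c, hc⟩
  have hk₀pos : 0 < (k₀ : ℝ) := by
    rw [← htcard]; exact_mod_cast Finset.card_pos.mpr htne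
  -- the key inequality from hn
  set L : ℝ := Real.log ((k₀ : ℝ) / ρ) with hL
  have hnL : L ≤ a * n := by
    have h1 : ENNReal.ofReal L ≤ α * n := by
      calc ENNReal.ofReal L = α * (α⁻¹ * ENNReal.ofReal L) := by
            rw [← mul_assoc, ENNReal.mul_inv_cancel hα0.ne' hαtop, one_mul]
        _ ≤ α * n := by
            refine mul_le_mul_right ?_ α
            convert hn using 3
            rw [hcovN]; simp [hL]
    calc L ≤ (ENNReal.ofReal L).toReal := le_max_left _ _
      _ ≤ (α * ↑n).toReal := ENNReal.toReal_mono
          (by exact ENNReal.mul_ne_top hαtop (ENNReal.natCast_ne_top n)) h1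
      _ = a * n := by simp [ENNReal.toReal_mul, ha]
  -- bad events
  set bad : T → Set Ω' := fun c => ⋂ i, X i ⁻¹' (Metric.ball c r)ᶜ with hbad
  have hbadmeas : ∀ c, MeasurableSet (bad c) :=
    fun c => MeasurableSet.iInter fun i => (hmeas i) measurableSet_ball.compl
  have hbadprob : ∀ c : T, Pr (bad c) ≤ ENNReal.ofReal ((1 - a) ^ n) := by
    intro c
    have hprod : Pr (bad c) = ∏ i : Fin n, Pr (X i ⁻¹' (Metric.ball c r)ᶜ) :=
      hindep.meas_iInter fun i =>
        MeasurableSpace.measurableSet_comap.mpr ⟨(Metric.ball c r)ᶜ, measurableSet_ball.compl, rfl⟩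
    have heach : ∀ i : Fin n, Pr (X i ⁻¹' (Metric.ball c r)ᶜ) ≤ ENNReal.ofReal (1 - a) := by
      intro i
      have : Pr (X i ⁻¹' (Metric.ball c r)ᶜ) = P (Metric.ball c r)ᶜ := by
        rw [← hid i, Measure.map_apply (hmeas i) measurableSet_ball.compl]
      rw [this, prob_compl_eq_one_sub measurableSet_ball]
      calc (1 : ℝ≥0∞) - P (Metric.ball c r) ≤ 1 - α :=
            tsub_le_tsub_left (iInf_le _ c) (1 : ℝ≥0∞)
        _ = ENNReal.ofReal (1 - a) := by
            rw [hαa, ← ENNReal.ofReal_one, ← ENNReal.ofReal_sub _ ha0.le]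
    calc Pr (bad c) = ∏ i : Fin n, Pr (X i ⁻¹' (Metric.ball c r)ᶜ) := hprod
      _ ≤ ∏ _i : Fin n, ENNReal.ofReal (1 - a) := Finset.prod_le_prod' fun i _ => heach i
      _ = (ENNReal.ofReal (1 - a)) ^ n := by
          rw [Finset.prod_const, Finset.card_univ, Fintype.card_fin]
      _ = ENNReal.ofReal ((1 - a) ^ n) := by
          rw [← ENNReal.ofReal_pow (by linarith)]
  -- real-number estimate
  have hpow : (1 - a) ^ n ≤ ρ / k₀ := by
    have h1 : (1 - a) ^ n ≤ Real.exp (-a) ^ n := by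
      apply pow_le_pow_left₀ (by linarith)
      linarith [Real.add_one_le_exp (-a)]
    have h2 : Real.exp (-a) ^ n = Real.exp (-(a * n)) := by
      rw [← Real.exp_nat_mul]; ring_nf
    have h3 : Real.exp (-(a * n)) ≤ Real.exp (-L) :=
      Real.exp_le_exp.mpr (by linarith)
    have h4 : Real.exp (-L) = ρ / k₀ := by
      rw [Real.exp_neg, hL, Real.exp_log (by positivity)]
      rw [inv_div]
    calc (1 - a) ^ n ≤ Real.exp (-a) ^ n := h1
      _ = Real.exp (-(a * n)) := h2
      _ ≤ Real.exp (-L) := h3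
      _ = ρ / k₀ := h4
  -- union bound
  set Bad : Set Ω' := ⋃ c ∈ t, bad c with hBad
  have hBadmeas : MeasurableSet Bad := t.measurableSet_biUnion fun c _ => hbadmeas c
  have hBadprob : Pr Bad ≤ ENNReal.ofReal ρ := by
    calc Pr Bad ≤ ∑ c ∈ t, Pr (bad c) := measure_biUnion_finset_le t bad
      _ ≤ ∑ _c ∈ t, ENNReal.ofReal ((1 - a) ^ n) := Finset.sum_le_sum fun c _ => hbadprob c
      _ = (t.card : ℝ≥0∞) * ENNReal.ofReal ((1 - a) ^ n) := by
          rw [Finset.sum_const, nsmul_eq_mul]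
      _ ≤ (k₀ : ℝ≥0∞) * ENNReal.ofReal (ρ / k₀) := by
          rw [htcard]
          exact mul_le_mul_right (ENNReal.ofReal_le_ofReal hpow) _
      _ = ENNReal.ofReal ρ := by
          rw [← ENNReal.ofReal_natCast k₀, ← ENNReal.ofReal_mul (by positivity)]
          rw [mul_div_cancel₀ _ (ne_of_gt hk₀pos)]
  -- conclusion
  have hsub : Badᶜ ⊆ {ω | ∀ p : T, ∃ i, dist p (X i ω) ≤ δ} := by
    intro ω hω p
    obtain ⟨c, hc, hpc⟩ := htcov p (Set.mem_univ p)
    have hpc' : dist p c ≤ r := by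
      rw [edist_dist] at hpc
      exact (ENNReal.ofReal_le_ofReal_iff hr.le).mp hpc
    have : ω ∉ bad c := fun h => hω (Set.mem_biUnion hc h)
    rw [hbad] at this
    simp only [Set.mem_iInter, Set.mem_preimage, Set.mem_compl_iff, not_forall, not_not] at this
    obtain ⟨i, hi⟩ := this
    have hxic : dist (X i ω) c < r := hi
    refine ⟨i, ?_⟩
    calc dist p (X i ω) ≤ dist p c + dist c (X i ω) := dist_triangle _ _ _
      _ ≤ r + r := by rw [dist_comm c (X i ω)]; linarith
      _ = δ := by rw [hrdef]; ring
  calc ENNReal.ofReal (1 - ρ) = 1 - ENNReal.ofReal ρ := by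
        rw [← ENNReal.ofReal_one, ← ENNReal.ofReal_sub _ hρ0.le]
    _ ≤ 1 - Pr Bad := tsub_le_tsub_left hBadprob 1
    _ = Pr Badᶜ := (prob_compl_eq_one_sub hBadmeas).symm
    _ ≤ Pr {ω | ∀ p : T, ∃ i, dist p (X i ω) ≤ δ} := measure_mono hsub
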